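/- arXiv:2105.09989 — 5 statements merged into one kernel-verified Lean document; each statement's English description precedes it below -/
import Mathlib

section
/- Let L be a loss function over X that is unambiguous and multi-group compatible. Then there exists a function f : X × [0,1] → [0,1] such that L is f-proper. -/
open scoped ENNReal
open scoped Classical

noncomputable section

namespace MultiPAC

variable {X : Type*}

def Supp (D : PMF (X × Bool)) : Set X := {x | ∃ y, D (x, y) ≠ 0}

structure LossFunction (X : Type*) where
  loss : PMF (X × Bool) → (X → unitInterval) → unitInterval
  locality : ∀ (D : PMF (X × Bool)) (h h' : X → unitInterval),
    (∀ x ∈ Supp D, h x = h' x) → loss D h = loss D h'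

def condOn (D : PMF (X × Bool)) (g : Set X) (hg : ∃ z : X × Bool, z.1 ∈ g ∧ D z ≠ 0) :
    PMF (X × Bool) :=
  D.filter {z | z.1 ∈ g} hg

def empDist {m : ℕ} (hm : m ≠ 0) (S : Fin m → X × Bool) : PMF (X × Bool) :=
  haveI : NeZero m := ⟨hm⟩
  (PMF.uniformOfFintype (Fin m)).map S

def iidProb {α : Type*} {m : ℕ} (D : PMF α) (E : Set (Fin m → α)) : ℝ≥0∞ :=
  ∑' S : Fin m → α, E.indicator (fun T => ∏ i, D (T i)) S

/-- Boundedness by a polynomial in `1/ε`, `1/δ` and `log k`. -/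
def PolyBound3 (M : ℝ → ℝ → ℕ → ℕ) : Prop :=
  ∃ (C : ℝ) (n : ℕ), ∀ ε δ : ℝ, ε ∈ Set.Ioo (0:ℝ) 1 → δ ∈ Set.Ioo (0:ℝ) 1 → ∀ k : ℕ,
    (M ε δ k : ℝ) ≤ C * (1/ε + 1/δ + Real.log k + 1) ^ n

/-- `L` has the uniform convergence property with sample-complexity function `M`. -/
def UniformConvergenceWith (L : LossFunction X) (M : ℝ → ℝ → ℕ → ℕ) : Prop :=
  ∀ (H : Finset (X → unitInterval)) (ε δ : ℝ), ε ∈ Set.Ioo (0:ℝ) 1 → δ ∈ Set.Ioo (0:ℝ) 1 →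
    ∀ (D : PMF (X × Bool)) (m : ℕ) (hm : m ≠ 0), M ε δ H.card ≤ m →
      1 - ENNReal.ofReal δ ≤ iidProb D {S : Fin m → X × Bool |
        ∀ h ∈ H, |(L.loss (empDist hm S) h : ℝ) - (L.loss D h : ℝ)| ≤ ε}

/-- `L` has the uniform convergence property (w.r.t. finite classes). -/
def UniformConvergence (L : LossFunction X) : Prop :=
  ∃ M : ℝ → ℝ → ℕ → ℕ, PolyBound3 M ∧ UniformConvergenceWith L M

/-- `L` is unambiguous: on every distribution supported on a single point `x` there is a
unique value `v` such that every predictor taking value `v` at `x` minimizes the loss. -/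
def Unambiguous (L : LossFunction X) : Prop :=
  ∀ (D : PMF (X × Bool)) (x : X), Supp D = {x} →
    ∃! v : unitInterval, ∀ h : X → unitInterval, h x = v →
      ∀ h' : X → unitInterval, L.loss D h ≤ L.loss D h'

/-- `L` is multi-group compatible. -/
def MultiGroupCompatible (L : LossFunction X) : Prop :=
  ∀ (D : PMF (X × Bool)) (H : Set (X → unitInterval)) (G : Set (Set X)),
    ∃ hstar : X → unitInterval, ∀ g ∈ G, ∀ (hg : ∃ z : X × Bool, z.1 ∈ g ∧ D z ≠ 0),
      ∀ h' ∈ H, L.loss (condOn D g hg) hstar ≤ L.loss (condOn D g hg) h'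

/-- The probability mass that `D` puts on the event `x ∈ g`. -/
def groupMass (D : PMF (X × Bool)) (g : Set X) : ℝ≥0∞ := D.toOuterMeasure {z | z.1 ∈ g}

/-- The probability (over an i.i.d. size-`m` sample from `D` and the internal randomness of
the algorithm `A`) that the output predictor of `A` is in `Good`. -/
def algSuccess {m : ℕ} (D : PMF (X × Bool)) (A : (Fin m → X × Bool) → PMF (X → unitInterval))
    (Good : (X → unitInterval) → Prop) : ℝ≥0∞ :=
  ∑' S : Fin m → X × Bool, (∏ i, D (S i)) * (A S).toOuterMeasure {h | Good h}

/-- Boundedness by a polynomial in `1/ε`, `1/δ`, `1/γ`, `log s` and `log t`. -/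
def PolyBound5 (M : ℝ → ℝ → ℝ → ℕ → ℕ → ℕ) : Prop :=
  ∃ (C : ℝ) (n : ℕ), ∀ ε δ γ : ℝ, ε ∈ Set.Ioo (0:ℝ) 1 → δ ∈ Set.Ioo (0:ℝ) 1 →
    γ ∈ Set.Ioo (0:ℝ) 1 → ∀ s t : ℕ,
      (M ε δ γ s t : ℝ) ≤ C * (1/ε + 1/δ + 1/γ + Real.log s + Real.log t + 1) ^ n

/-- `L` is multi-group agnostic PAC learnable. -/
def MultiGroupLearnable (L : LossFunction X) : Prop :=
  ∃ (A : (m : ℕ) → (Fin m → X × Bool) → PMF (X → unitInterval))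
    (M : ℝ → ℝ → ℝ → ℕ → ℕ → ℕ), PolyBound5 M ∧
    ∀ (ε δ γ : ℝ), ε ∈ Set.Ioo (0:ℝ) 1 → δ ∈ Set.Ioo (0:ℝ) 1 → γ ∈ Set.Ioo (0:ℝ) 1 →
    ∀ (H : Finset (X → unitInterval)) (G : Finset (Set X)) (D : PMF (X × Bool)) (m : ℕ),
      M ε δ γ H.card G.card ≤ m →
      1 - ENNReal.ofReal δ ≤ algSuccess D (A m) (fun h =>
        ∀ g ∈ G, ENNReal.ofReal γ ≤ groupMass D g →
          ∀ (hg : ∃ z : X × Bool, z.1 ∈ g ∧ D z ≠ 0),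
          ∀ h' ∈ H, (L.loss (condOn D g hg) h : ℝ) ≤ (L.loss (condOn D g hg) h' : ℝ) + ε)

/-- `Pr_D[y = 1 ∣ X = x]`, as an element of `[0,1]`. -/
def condProb (D : PMF (X × Bool)) (x : X) : unitInterval :=
  ⟨(D (x, true)).toReal / ((D (x, true)).toReal + (D (x, false)).toReal), by
    constructor
    · positivity
    · rcases eq_or_lt_of_le (add_nonneg ENNReal.toReal_nonneg ENNReal.toReal_nonneg :
        (0:ℝ) ≤ (D (x, true)).toReal + (D (x, false)).toReal) with hz | hz
      · rw [← hz, div_zero]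
        exact zero_le_one
      · rw [div_le_one hz]
        exact le_add_of_nonneg_right ENNReal.toReal_nonneg⟩

/-- The predictor `h_D` : `h_D x = f (x, p_D x)` on the support of `D`, and `0` elsewhere. -/
def bayesPred (f : X × unitInterval → unitInterval) (D : PMF (X × Bool)) :
    X → unitInterval :=
  fun x => if x ∈ Supp D then f (x, condProb D x) else 0

/-- `L` is `f`-proper. -/
def FProper (f : X × unitInterval → unitInterval) (L : LossFunction X) : Prop :=
  ∀ (D : PMF (X × Bool)) (h : X → unitInterval), L.loss D (bayesPred f D) ≤ L.loss D h


/-- The PMF on `X × Bool` supported on `{x}` with conditional probability `p`. -/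
def pointPMF (x : X) (p : unitInterval) : PMF (X × Bool) :=
  (PMF.bernoulli (Real.toNNReal p) (Real.toNNReal_le_one.mpr p.2.2)).map (fun b => (x, b))

lemma pointPMF_apply (x : X) (p : unitInterval) (x' : X) (y : Bool) :
    pointPMF x p (x', y) =
      if x' = x then (Bool.rec (1 - ENNReal.ofReal p) (ENNReal.ofReal p) y) else 0 := by
  classical
  rw [pointPMF, PMF.map_apply, tsum_bool]
  by_cases hx : x' = x
  · subst hx
    cases y <;> simp [Prod.ext_iff, PMF.bernoulli_apply, ENNReal.ofReal, ENNReal.coe_sub]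
  · simp [Prod.ext_iff, hx]

lemma supp_pointPMF (x : X) (p : unitInterval) : Supp (pointPMF x p) = {x} := by
  ext x'
  constructor
  · rintro ⟨y, hy⟩
    by_contra hx
    rw [pointPMF_apply] at hy
    exact hy (if_neg fun hh => hx hh)
  · rintro rfl
    by_cases hp : ENNReal.ofReal p = 0
    · exact ⟨false, by rw [pointPMF_apply, if_pos rfl]; simp [hp]⟩
    · exact ⟨true, by rw [pointPMF_apply, if_pos rfl]; simpa using hp⟩

lemma condProb_pointPMF (x : X) (p : unitInterval) : condProb (pointPMF x p) x = p := by
  have ht : pointPMF x p (x, true) = ENNReal.ofReal p := by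
    rw [pointPMF_apply, if_pos rfl]
  have hf : pointPMF x p (x, false) = 1 - ENNReal.ofReal p := by
    rw [pointPMF_apply, if_pos rfl]
  have h1 : (pointPMF x p (x, true)).toReal = (p : ℝ) := by
    rw [ht, ENNReal.toReal_ofReal p.2.1]
  have h2 : (pointPMF x p (x, false)).toReal = 1 - (p : ℝ) := by
    rw [hf, ENNReal.toReal_sub_of_le (ENNReal.ofReal_le_one.mpr p.2.2) ENNReal.one_ne_top,
      ENNReal.toReal_one, ENNReal.toReal_ofReal p.2.1]
  apply Subtype.ext
  show (pointPMF x p (x, true)).toReal /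
    ((pointPMF x p (x, true)).toReal + (pointPMF x p (x, false)).toReal) = (p : ℝ)
  rw [h1, h2, show (p : ℝ) + (1 - (p : ℝ)) = 1 by ring, div_one]

/-- A PMF supported on a single point is the `pointPMF` of its conditional probability. -/
lemma eq_pointPMF_of_supp_singleton (D : PMF (X × Bool)) (x : X) (hS : Supp D = {x}) :
    D = pointPMF x (condProb D x) := by
  classical
  have hzero : ∀ z : X × Bool, z.1 ≠ x → D z = 0 := by
    intro z hz
    by_contra h0
    have : z.1 ∈ Supp D := ⟨z.2, h0⟩
    rw [hS] at this
    exact hz this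
  set a := D (x, true) with ha
  set b := D (x, false) with hb
  have hsum : a + b = 1 := by
    have h1 : ∑' z, D z = 1 := D.tsum_coe
    have h2 : ∑' z, D z = ∑ z ∈ ({(x, true), (x, false)} : Finset (X × Bool)), D z := by
      refine tsum_eq_sum ?_
      intro z hz
      apply hzero
      intro hzx
      apply hz
      have hze : z = (x, z.2) := by rw [← hzx]
      rw [hze]
      rcases Bool.eq_false_or_eq_true z.2 with h | h <;> rw [h] <;> simp
    rw [h2, Finset.sum_pair (by simp)] at h1
    exact h1
  have haT : a ≠ ∞ := D.apply_ne_top _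
  have hbT : b ≠ ∞ := D.apply_ne_top _
  have htsum : a.toReal + b.toReal = 1 := by
    rw [← ENNReal.toReal_add haT hbT, hsum, ENNReal.toReal_one]
  have hcond : ((condProb D x : unitInterval) : ℝ) = a.toReal := by
    show a.toReal / (a.toReal + b.toReal) = a.toReal
    rw [htsum, div_one]
  have hofReal : ENNReal.ofReal ((condProb D x : unitInterval) : ℝ) = a := by
    rw [hcond, ENNReal.ofReal_toReal haT]
  have hbeq : 1 - ENNReal.ofReal ((condProb D x : unitInterval) : ℝ) = b := by
    rw [hofReal]
    exact (ENNReal.eq_sub_of_add_eq haT (by rw [add_comm]; exact hsum)).symm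
  ext z
  obtain ⟨x', y⟩ := z
  rw [pointPMF_apply]
  by_cases hx : x' = x
  · subst hx
    cases y
    · rw [if_pos rfl]; exact hbeq.symm
    · rw [if_pos rfl]; exact hofReal.symm
  · rw [if_neg hx]
    exact hzero (x', y) hx

lemma supp_condOn_singleton (D : PMF (X × Bool)) (x : X) (hx : x ∈ Supp D)
    (hg : ∃ z : X × Bool, z.1 ∈ ({x} : Set X) ∧ D z ≠ 0) :
    Supp (condOn D ({x} : Set X) hg) = {x} := by
  ext x'
  constructor
  · rintro ⟨y, hy⟩
    have := (PMF.filter_apply_ne_zero_iff hg (x', y)).mp hy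
    exact this.1
  · intro hx'
    have hxx : x' = x := hx'
    subst hxx
    obtain ⟨y, hy⟩ := hx
    exact ⟨y, (PMF.filter_apply_ne_zero_iff hg (x', y)).mpr ⟨rfl, hy⟩⟩

lemma condProb_condOn_singleton (D : PMF (X × Bool)) (x : X) (hx : x ∈ Supp D)
    (hg : ∃ z : X × Bool, z.1 ∈ ({x} : Set X) ∧ D z ≠ 0) :
    condProb (condOn D ({x} : Set X) hg) x = condProb D x := by
  classical
  set s : Set (X × Bool) := {z | z.1 ∈ ({x} : Set X)} with hs
  set T : ℝ≥0∞ := ∑' z, s.indicator D z with hT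
  have hT0 : T ≠ 0 := by
    rw [hT, Ne, ENNReal.tsum_eq_zero]
    push_neg
    obtain ⟨z, hz1, hz2⟩ := hg
    exact ⟨z, by rwa [Set.indicator_of_mem (show z ∈ s from hz1)]⟩
  have hTtop : T ≠ ∞ := D.tsum_coe_indicator_ne_top s
  have hc0 : T⁻¹ ≠ 0 := ENNReal.inv_ne_zero.mpr hTtop
  have hctop : T⁻¹ ≠ ∞ := ENNReal.inv_ne_top.mpr hT0
  have happ : ∀ y : Bool, condOn D ({x} : Set X) hg (x, y) = D (x, y) * T⁻¹ := by
    intro y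
    rw [condOn, PMF.filter_apply (p := D) (s := {z : X × Bool | z.1 ∈ ({x} : Set X)}) hg, Set.indicator_of_mem (by exact rfl : ((x, y) : X × Bool) ∈ s)]
  have htc : T⁻¹.toReal ≠ 0 := by
    rw [ENNReal.toReal_ne_zero]
    exact ⟨hc0, hctop⟩
  apply Subtype.ext
  show (condOn D ({x} : Set X) hg (x, true)).toReal /
      ((condOn D ({x} : Set X) hg (x, true)).toReal +
        (condOn D ({x} : Set X) hg (x, false)).toReal) =
    (D (x, true)).toReal / ((D (x, true)).toReal + (D (x, false)).toReal)
  rw [happ true, happ false, ENNReal.toReal_mul, ENNReal.toReal_mul]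
  rw [show (D (x, true)).toReal * T⁻¹.toReal + (D (x, false)).toReal * T⁻¹.toReal =
    ((D (x, true)).toReal + (D (x, false)).toReal) * T⁻¹.toReal from by ring]
  exact mul_div_mul_right _ _ htc

lemma condOn_univ (D : PMF (X × Bool)) (hg : ∃ z : X × Bool, z.1 ∈ (Set.univ : Set X) ∧ D z ≠ 0) :
    condOn D Set.univ hg = D := by
  have hs : {z : X × Bool | z.1 ∈ (Set.univ : Set X)} = Set.univ := by ext z; simp
  ext z
  rw [condOn, PMF.filter_apply (p := D) (s := {z : X × Bool | z.1 ∈ (Set.univ : Set X)}) hg, hs, Set.indicator_univ]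
  rw [D.tsum_coe]
  simp

/-- If a loss function over a nonempty feature space `X` is unambiguous and
multi-group compatible, then there exists `f : X × [0,1] → [0,1]` such that `L` is `f`-proper. -/
theorem compatible_implies_fproper {X : Type*} [Nonempty X] (L : LossFunction X)
    (hUnamb : Unambiguous L) (hComp : MultiGroupCompatible L) :
    ∃ f : X × unitInterval → unitInterval, FProper f L := by
  classical
  refine ⟨fun q => (hUnamb (pointPMF q.1 q.2) q.1 (supp_pointPMF q.1 q.2)).choose, ?_⟩
  intro D h
  obtain ⟨hstar, hopt⟩ :=
    hComp D Set.univ (insert Set.univ (Set.range fun x : X => ({x} : Set X)))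
  have hg_univ : ∃ z : X × Bool, z.1 ∈ (Set.univ : Set X) ∧ D z ≠ 0 := by
    obtain ⟨z, hz⟩ := D.support_nonempty
    exact ⟨z, trivial, hz⟩
  have h1 : L.loss D hstar ≤ L.loss D h := by
    have := hopt Set.univ (Set.mem_insert _ _) hg_univ h (Set.mem_univ h)
    rwa [condOn_univ D hg_univ] at this
  have h2 : L.loss D (bayesPred
      (fun q => (hUnamb (pointPMF q.1 q.2) q.1 (supp_pointPMF q.1 q.2)).choose) D) =
      L.loss D hstar := by
    apply L.locality
    intro x hx
    rw [bayesPred, if_pos hx]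
    set p := condProb D x with hp
    have hg : ∃ z : X × Bool, z.1 ∈ ({x} : Set X) ∧ D z ≠ 0 := by
      obtain ⟨y, hy⟩ := hx
      exact ⟨(x, y), rfl, hy⟩
    have hSupp := supp_condOn_singleton D x hx hg
    have hEq : condOn D ({x} : Set X) hg = pointPMF x p := by
      rw [hp, ← condProb_condOn_singleton D x hx hg]
      exact eq_pointPMF_of_supp_singleton _ x hSupp
    have hopt' : ∀ h' : X → unitInterval,
        L.loss (pointPMF x p) hstar ≤ L.loss (pointPMF x p) h' := by
      intro h'
      have := hopt ({x} : Set X) (Set.mem_insert_iff.mpr (Or.inr ⟨x, rfl⟩)) hg h'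
        (Set.mem_univ h')
      rwa [hEq] at this
    have hP : ∀ h0 : X → unitInterval, h0 x = hstar x →
        ∀ h' : X → unitInterval, L.loss (pointPMF x p) h0 ≤ L.loss (pointPMF x p) h' := by
      intro h0 hh0 h'
      have hloc : L.loss (pointPMF x p) h0 = L.loss (pointPMF x p) hstar := by
        apply L.locality
        intro x' hx'
        rw [supp_pointPMF] at hx'
        rw [hx']
        exact hh0
      rw [hloc]
      exact hopt' h'
    exact ((hUnamb (pointPMF x p) x (supp_pointPMF x p)).choose_spec.2 (hstar x) hP).symm
  calc L.loss D (bayesPred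
      (fun q => (hUnamb (pointPMF q.1 q.2) q.1 (supp_pointPMF q.1 q.2)).choose) D)
      = L.loss D hstar := h2
    _ ≤ L.loss D h := h1

end MultiPAC
end
end

section
/- Let f : X × [0,1] → [0,1] and let L be a loss function over X that is f-proper. Then L is multi-group compatible; moreover, for every distribution D over X × Y, the single predictor h_D (defined by h_D(x) = f(x, p_D(x)) for x ∈ supp(D) and h_D(x) = 0 otherwise) satisfies L_{D_g}(h_D) ≤ L_{D_g}(h') for every g ⊆ X with Pr_D[x ∈ g] > 0 and every predictor h'. -/
open scoped ENNReal
open scoped Classical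

noncomputable section

namespace MultiPAC

variable {X : Type*}

lemma condProb_condOn (D : PMF (X × Bool)) (g : Set X)
    (hg : ∃ z : X × Bool, z.1 ∈ g ∧ D z ≠ 0) {x : X} (hx : x ∈ g) :
    condProb (condOn D g hg) x = condProb D x := by
  set s : Set (X × Bool) := {z | z.1 ∈ g}
  set c : ℝ≥0∞ := (∑' a, (s.indicator D) a)⁻¹ with hc
  have hsum_ne_zero : (∑' a, (s.indicator D) a) ≠ 0 := by
    obtain ⟨z, hz1, hz2⟩ := hg
    intro h0
    have := (ENNReal.tsum_eq_zero.mp h0) z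
    rw [Set.indicator_of_mem (show z ∈ s from hz1)] at this
    exact hz2 this
  have hsum_le : (∑' a, (s.indicator D) a) ≤ 1 := by
    rw [← D.tsum_coe]
    exact ENNReal.tsum_le_tsum fun a => Set.indicator_le_self _ _ a
  have hc_ne_top : c ≠ ⊤ := by
    simp only [hc, ENNReal.inv_ne_top]
    exact hsum_ne_zero
  have hc_ne_zero : c ≠ 0 := by
    simp only [hc, ENNReal.inv_ne_zero]
    exact ne_top_of_le_ne_top ENNReal.one_ne_top hsum_le
  have happ : ∀ b : Bool, (condOn D g hg) (x, b) = D (x, b) * c := by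
    intro b
    rw [condOn]
    refine (PMF.filter_apply ..).trans ?_
    rw [Set.indicator_of_mem (by exact hx : (x, b) ∈ s)]
  have htr : ∀ b : Bool, ((condOn D g hg) (x, b)).toReal = (D (x, b)).toReal * c.toReal := by
    intro b
    rw [happ b, ENNReal.toReal_mul]
  have hct_pos : 0 < c.toReal := ENNReal.toReal_pos hc_ne_zero hc_ne_top
  apply Subtype.ext
  simp only [condProb, htr]
  rw [← add_mul, mul_div_mul_right _ _ (ne_of_gt hct_pos)]

lemma supp_condOn_subset (D : PMF (X × Bool)) (g : Set X)
    (hg : ∃ z : X × Bool, z.1 ∈ g ∧ D z ≠ 0) :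
    Supp (condOn D g hg) ⊆ Supp D ∩ g := by
  rintro x ⟨y, hy⟩
  rw [condOn] at hy
  have := (PMF.filter_apply_ne_zero_iff (p := D) (s := {z | z.1 ∈ g}) (h := hg) (x, y)).mp hy
  exact ⟨⟨y, this.2⟩, this.1⟩

/-- If `L` is `f`-proper then `L` is multi-group compatible; moreover, for
every distribution `D`, the single predictor `h_D = bayesPred f D` is simultaneously optimal
on `D` conditioned on every group `g` of positive probability, against every predictor. -/
theorem fproper_implies_compatible {X : Type*} [Nonempty X]
    (f : X × unitInterval → unitInterval) (L : LossFunction X) (hf : FProper f L) :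
    MultiGroupCompatible L ∧
      ∀ (D : PMF (X × Bool)) (g : Set X) (hg : ∃ z : X × Bool, z.1 ∈ g ∧ D z ≠ 0)
        (h' : X → unitInterval),
        L.loss (condOn D g hg) (bayesPred f D) ≤ L.loss (condOn D g hg) h' := by
  have key : ∀ (D : PMF (X × Bool)) (g : Set X) (hg : ∃ z : X × Bool, z.1 ∈ g ∧ D z ≠ 0)
      (h' : X → unitInterval),
      L.loss (condOn D g hg) (bayesPred f D) ≤ L.loss (condOn D g hg) h' := by
    intro D g hg h'
    have heq : L.loss (condOn D g hg) (bayesPred f D)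
        = L.loss (condOn D g hg) (bayesPred f (condOn D g hg)) := by
      apply L.locality
      intro x hx
      obtain ⟨hxD, hxg⟩ := supp_condOn_subset D g hg hx
      simp only [bayesPred, if_pos hx, if_pos hxD, condProb_condOn D g hg hxg]
    rw [heq]
    exact hf (condOn D g hg) h'
  refine ⟨?_, key⟩
  intro D H G
  exact ⟨bayesPred f D, fun g _ hg h' _ => key D g hg h'⟩

end MultiPAC
end
end

section
/- Let L be a loss function over X that is unambiguous and multi-group compatible. Then for every distribution D over X × Y, the predictor h defined by h(x) = v_x for x ∈ supp(D) — where v_x is the unique value in [0,1] such that predictors taking value v_x at x minimize L on the singleton distribution D_x (D conditioned on X = x) — and h(x) = 0 for x ∉ supp(D), satisfies L_D(h) ≤ L_D(h') for every predictor h'. -/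
open scoped ENNReal
open scoped Classical

noncomputable section

namespace MultiPAC

variable {X : Type*}

/-- `D` conditioned on `X = x`, for `x` in the support of `D`. -/
def condOnPoint (D : PMF (X × Bool)) (x : X) (hx : x ∈ Supp D) : PMF (X × Bool) :=
  condOn D {x} (by obtain ⟨y, hy⟩ := hx; exact ⟨(x, y), rfl, hy⟩)

lemma supp_condOnPoint (D : PMF (X × Bool)) (x : X) (hx : x ∈ Supp D) :
    Supp (condOnPoint D x hx) = {x} := by
  ext x'
  constructor
  · rintro ⟨y, hy⟩
    unfold condOnPoint condOn at hy
    have := (PMF.filter_apply_ne_zero_iff _ (x', y)).mp hy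
    exact this.1
  · rintro rfl
    obtain ⟨y, hy⟩ := hx
    refine ⟨y, ?_⟩
    unfold condOnPoint condOn
    exact (PMF.filter_apply_ne_zero_iff _ (x', y)).mpr ⟨rfl, hy⟩

/-- Let `L` be unambiguous and multi-group compatible.  Then for every
distribution `D`, any predictor `h` that is `0` outside the support of `D` and whose value at
each `x ∈ supp(D)` is the (unique) loss-minimizing value for the singleton distribution `D_x`
(i.e. every predictor taking the value `h x` at `x` minimizes `L` on `D_x`) is a global loss
minimizer for `D`. -/
theorem pointwise_optimal_is_optimal {X : Type*} [Nonempty X] (L : LossFunction X)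
    (hUnamb : Unambiguous L) (hComp : MultiGroupCompatible L)
    (D : PMF (X × Bool)) (h : X → unitInterval)
    (hOut : ∀ x, x ∉ Supp D → h x = 0)
    (hIn : ∀ (x : X) (hx : x ∈ Supp D), ∀ h₁ : X → unitInterval, h₁ x = h x →
      ∀ h₂ : X → unitInterval,
        L.loss (condOnPoint D x hx) h₁ ≤ L.loss (condOnPoint D x hx) h₂) :
    ∀ h' : X → unitInterval, L.loss D h ≤ L.loss D h' := by
  intro h'
  obtain ⟨hs, hstar⟩ := hComp D Set.univ ({Set.univ} ∪ {g | ∃ x ∈ Supp D, g = {x}})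
  -- hs agrees with h on the support
  have hagree : ∀ x ∈ Supp D, h x = hs x := by
    intro x hx
    have hgx : ({x} : Set X) ∈ ({Set.univ} ∪ {g | ∃ x ∈ Supp D, g = {x}} : Set (Set X)) :=
      Or.inr ⟨x, hx, rfl⟩
    obtain ⟨y, hy⟩ := hx
    have hgne : ∃ z : X × Bool, z.1 ∈ ({x} : Set X) ∧ D z ≠ 0 := ⟨(x, y), rfl, hy⟩
    have hmin : ∀ h' : X → unitInterval,
        L.loss (condOnPoint D x ⟨y, hy⟩) hs ≤ L.loss (condOnPoint D x ⟨y, hy⟩) h' := by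
      intro h'
      exact hstar {x} hgx hgne h' (Set.mem_univ _)
    obtain ⟨v, hv, huniq⟩ := hUnamb (condOnPoint D x ⟨y, hy⟩) x (supp_condOnPoint D x ⟨y, hy⟩)
    have h1 : h x = v := huniq (h x) (hIn x ⟨y, hy⟩)
    have h2 : hs x = v := by
      refine huniq (hs x) ?_
      intro h₁ h₁x h₂
      have : L.loss (condOnPoint D x ⟨y, hy⟩) h₁ = L.loss (condOnPoint D x ⟨y, hy⟩) hs := by
        apply L.locality
        intro x' hx'
        rw [supp_condOnPoint D x ⟨y, hy⟩] at hx'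
        cases hx'
        exact h₁x
      rw [this]
      exact hmin h₂
    rw [h1, h2]
  have hloc : L.loss D h = L.loss D hs := L.locality D h hs hagree
  rw [hloc]
  have hune : ∃ z : X × Bool, z.1 ∈ (Set.univ : Set X) ∧ D z ≠ 0 := by
    have := D.tsum_coe
    by_contra hc
    push_neg at hc
    have : ∀ z : X × Bool, D z = 0 := fun z => hc z (Set.mem_univ _)
    have h0 : ∑' z : X × Bool, D z = 0 := by simp [this]
    rw [D.tsum_coe] at h0
    exact one_ne_zero h0
  have := hstar Set.univ (Or.inl rfl) hune h' (Set.mem_univ _)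
  rwa [condOn_univ D hune] at this

end MultiPAC
end
end

section
/- There exist a feature space X, a loss function L over X that has the uniform convergence property, a distribution D over X × {0,1} with finite support, a finite set H of predictors, a finite collection G of subsets of X each having positive probability under D, and a real ε > 0, such that no predictor h : X → [0,1] satisfies L_{D_g}(h) ≤ min_{h' ∈ H} L_{D_g}(h') + ε simultaneously for all g ∈ G. -/
open scoped ENNReal
open scoped Classical

noncomputable section

namespace MultiPAC

variable {X : Type*}

/-! ### Auxiliary construction for `exists_incompatible_loss` -/

section CE

def ceQ (D : PMF (Bool × Bool)) : ℝ≥0∞ := D (true, true) + D (true, false)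
def ceP (D : PMF (Bool × Bool)) : ℝ := (ceQ D).toReal
def ceTgt (x : ℝ) : ℝ := max 0 (min 1 (2 - 2*x))
def ceVal (D : PMF (Bool × Bool)) (h : Bool → unitInterval) : ℝ :=
  ceP D * |(h true : ℝ) - ceTgt (ceP D)|

lemma ceQ_ne_top (D : PMF (Bool × Bool)) : ceQ D ≠ ⊤ :=
  ENNReal.add_ne_top.2 ⟨PMF.apply_ne_top _ _, PMF.apply_ne_top _ _⟩

lemma ceQ_le_one (D : PMF (Bool × Bool)) : ceQ D ≤ 1 := by
  have h1 : ceQ D = ∑ z ∈ ({(true,true),(true,false)} : Finset (Bool × Bool)), D z := by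
    rw [Finset.sum_pair (by simp)]; rfl
  rw [h1, ← D.tsum_coe]
  exact Summable.sum_le_tsum _ (fun _ _ => zero_le) ENNReal.summable

lemma ceP_nonneg (D : PMF (Bool × Bool)) : 0 ≤ ceP D := ENNReal.toReal_nonneg

lemma ceP_le_one (D : PMF (Bool × Bool)) : ceP D ≤ 1 := by
  have := ENNReal.toReal_mono (by simp) (ceQ_le_one D)
  simpa [ceP] using this

lemma ceTgt_nonneg (x : ℝ) : 0 ≤ ceTgt x := le_max_left _ _
lemma ceTgt_le_one (x : ℝ) : ceTgt x ≤ 1 := max_le zero_le_one (min_le_left _ _)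

lemma ceTgt_lip (x y : ℝ) : |ceTgt x - ceTgt y| ≤ 2 * |x - y| := by
  have h1 : |ceTgt x - ceTgt y| ≤ |min 1 (2-2*x) - min 1 (2-2*y)| := by
    rw [ceTgt, ceTgt, max_comm 0 _, max_comm 0 _]
    exact abs_max_sub_max_le_abs _ _ _
  have h2 : |min 1 (2-2*x) - min 1 (2-2*y)| ≤ |(2-2*x) - (2-2*y)| := by
    have := abs_min_sub_min_le_max 1 (2-2*x) 1 (2-2*y)
    simpa using this
  have h3 : |(2-2*x) - (2-2*y)| = 2 * |x - y| := by
    rw [show (2-2*x) - (2-2*y) = -(2*(x-y)) by ring, abs_neg, abs_mul]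
    simp
  linarith

lemma ceVal_nonneg (D : PMF (Bool × Bool)) (h : Bool → unitInterval) : 0 ≤ ceVal D h :=
  mul_nonneg (ceP_nonneg D) (abs_nonneg _)

lemma abs_sub_le_one' {a b : ℝ} (ha : 0 ≤ a) (ha1 : a ≤ 1) (hb : 0 ≤ b) (hb1 : b ≤ 1) :
    |a - b| ≤ 1 := abs_le.2 ⟨by linarith, by linarith⟩

lemma ceVal_le_one (D : PMF (Bool × Bool)) (h : Bool → unitInterval) : ceVal D h ≤ 1 := by
  have := abs_sub_le_one' (h true).2.1 (h true).2.2 (ceTgt_nonneg (ceP D)) (ceTgt_le_one (ceP D))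
  calc ceVal D h ≤ 1 * 1 := mul_le_mul (ceP_le_one D) this (abs_nonneg _) zero_le_one
    _ = 1 := one_mul 1

def ceLoss : LossFunction Bool where
  loss D h := ⟨ceVal D h, ceVal_nonneg D h, ceVal_le_one D h⟩
  locality D h h' hagree := by
    by_cases ht : true ∈ Supp D
    · have : h true = h' true := hagree true ht
      simp only [Subtype.mk.injEq, ceVal, this]
    · have h0 : ∀ y, D (true, y) = 0 := by
        intro y; by_contra hy; exact ht ⟨y, hy⟩
      have : ceQ D = 0 := by simp [ceQ, h0]
      have hp : ceP D = 0 := by simp [ceP, this]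
      simp only [Subtype.mk.injEq, ceVal, hp, zero_mul]

lemma ceVal_diff_le (D D' : PMF (Bool × Bool)) (h : Bool → unitInterval) :
    |ceVal D' h - ceVal D h| ≤ 3 * |ceP D' - ceP D| := by
  set p := ceP D with hp
  set p' := ceP D' with hp'
  set a := ((h true : ℝ)) with ha
  have key : ceVal D' h - ceVal D h = (p' - p) * |a - ceTgt p'| + p * (|a - ceTgt p'| - |a - ceTgt p|) := by
    rw [ceVal, ceVal]; ring
  have h1 : |a - ceTgt p'| ≤ 1 :=
    abs_sub_le_one' (h true).2.1 (h true).2.2 (ceTgt_nonneg _) (ceTgt_le_one _)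
  have h2 : (abs (|a - ceTgt p'| - |a - ceTgt p|)) ≤ |ceTgt p - ceTgt p'| := by
    have := abs_abs_sub_abs_le_abs_sub (a - ceTgt p') (a - ceTgt p)
    calc (abs (|a - ceTgt p'| - |a - ceTgt p|)) ≤ |(a - ceTgt p') - (a - ceTgt p)| := this
      _ = |ceTgt p - ceTgt p'| := by rw [show (a - ceTgt p') - (a - ceTgt p) = ceTgt p - ceTgt p' by ring]
  have h3 : |ceTgt p - ceTgt p'| ≤ 2 * |p - p'| := ceTgt_lip p p'
  have h4 : |p - p'| = |p' - p| := abs_sub_comm _ _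
  have hpn : 0 ≤ p := ceP_nonneg D
  have hp1 : p ≤ 1 := ceP_le_one D
  calc |ceVal D' h - ceVal D h|
      ≤ (abs ((p' - p) * |a - ceTgt p'|)) + (abs (p * (|a - ceTgt p'| - |a - ceTgt p|))) := by
        rw [key]; exact abs_add_le _ _
    _ ≤ |p' - p| * 1 + 1 * (2 * |p' - p|) := by
        rw [abs_mul, abs_mul, abs_abs]
        have e2 : (abs (|a - ceTgt p'| - |a - ceTgt p|)) ≤ 2 * |p' - p| := by
          calc (abs (|a - ceTgt p'| - |a - ceTgt p|)) ≤ 2 * |p - p'| := le_trans h2 h3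
            _ = 2 * |p' - p| := by rw [h4]
        have e1 : |p' - p| * |a - ceTgt p'| ≤ |p' - p| * 1 :=
          mul_le_mul_of_nonneg_left h1 (abs_nonneg _)
        have e3 : |p| * (abs (|a - ceTgt p'| - |a - ceTgt p|)) ≤ 1 * (2 * |p' - p|) :=
          mul_le_mul (by rw [abs_of_nonneg hpn]; exact hp1) e2 (abs_nonneg _) zero_le_one
        linarith
    _ = 3 * |p' - p| := by ring

def ceW (D : PMF (Bool × Bool)) (z : Bool × Bool) : ℝ := (D z).toReal
def ceφ (z : Bool × Bool) : ℝ := if z.1 = true then 1 else 0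

lemma ceW_nonneg (D : PMF (Bool × Bool)) (z : Bool × Bool) : 0 ≤ ceW D z :=
  ENNReal.toReal_nonneg

lemma sum_D_eq_one (D : PMF (Bool × Bool)) : ∑ z, D z = 1 := by
  have h := D.tsum_coe
  rwa [tsum_fintype] at h

lemma sum_ceW (D : PMF (Bool × Bool)) : ∑ z, ceW D z = 1 := by
  have h2 : (∑ z, D z).toReal = (1:ℝ≥0∞).toReal := by rw [sum_D_eq_one]
  rw [ENNReal.toReal_sum (fun a _ => PMF.apply_ne_top D a)] at h2
  simpa [ceW] using h2

lemma sum_prod_eq {m : ℕ} (f : Fin m → (Bool × Bool) → ℝ) :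
    ∑ S : Fin m → Bool × Bool, ∏ i, f i (S i) = ∏ i, ∑ z, f i z :=
  (Fintype.prod_sum f).symm

def ceProd (D : PMF (Bool × Bool)) {m : ℕ} (S : Fin m → Bool × Bool) : ℝ :=
  ∏ i, ceW D (S i)

lemma ceProd_nonneg (D : PMF (Bool × Bool)) {m : ℕ} (S : Fin m → Bool × Bool) :
    0 ≤ ceProd D S := Finset.prod_nonneg (fun i _ => ceW_nonneg D (S i))

lemma exp_one (D : PMF (Bool × Bool)) (m : ℕ) :
    ∑ S : Fin m → Bool × Bool, ceProd D S = 1 := by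
  have h := sum_prod_eq (m := m) (fun _ z => ceW D z)
  simpa [ceProd, sum_ceW] using h

lemma exp_single (D : PMF (Bool × Bool)) {m : ℕ} (g : Bool × Bool → ℝ) (i0 : Fin m) :
    ∑ S : Fin m → Bool × Bool, ceProd D S * g (S i0) = ∑ z, ceW D z * g z := by
  have h := sum_prod_eq (m := m) (fun i z => ceW D z * (if i = i0 then g z else 1))
  have key : ∀ S : Fin m → Bool × Bool,
      ∏ i, ceW D (S i) * (if i = i0 then g (S i) else 1) = ceProd D S * g (S i0) := by
    intro S
    rw [Finset.prod_mul_distrib]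
    congr 1
    simp [Finset.prod_ite_eq' Finset.univ i0 (fun i => g (S i))]
  have rhs : ∀ i : Fin m, (∑ z, ceW D z * (if i = i0 then g z else 1))
      = (if i = i0 then ∑ z, ceW D z * g z else 1) := by
    intro i
    by_cases hi : i = i0 <;> simp [hi, sum_ceW]
  simp only [key] at h
  rw [h]
  rw [Finset.prod_congr rfl (fun i _ => rhs i)]
  simp [Finset.prod_ite_eq' Finset.univ i0 (fun _ => ∑ z, ceW D z * g z)]

lemma exp_pair (D : PMF (Bool × Bool)) {m : ℕ} (g g' : Bool × Bool → ℝ) (i0 j0 : Fin m)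
    (hne : i0 ≠ j0) :
    ∑ S : Fin m → Bool × Bool, ceProd D S * (g (S i0) * g' (S j0)) =
      (∑ z, ceW D z * g z) * (∑ z, ceW D z * g' z) := by
  have h := sum_prod_eq (m := m)
    (fun i z => ceW D z * (if i = i0 then g z else 1) * (if i = j0 then g' z else 1))
  have key : ∀ S : Fin m → Bool × Bool,
      ∏ i, ceW D (S i) * (if i = i0 then g (S i) else 1) * (if i = j0 then g' (S i) else 1)
        = ceProd D S * (g (S i0) * g' (S j0)) := by
    intro S
    rw [Finset.prod_mul_distrib, Finset.prod_mul_distrib]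
    simp [ceProd, Finset.prod_ite_eq' Finset.univ i0 (fun i => g (S i)),
      Finset.prod_ite_eq' Finset.univ j0 (fun i => g' (S i)), mul_assoc]
  have rhs : ∀ i : Fin m, (∑ z, ceW D z * (if i = i0 then g z else 1) * (if i = j0 then g' z else 1))
      = (if i = i0 then ∑ z, ceW D z * g z else 1) * (if i = j0 then ∑ z, ceW D z * g' z else 1) := by
    intro i
    by_cases h1 : i = i0 <;> by_cases h2 : i = j0
    · exact absurd (h1 ▸ h2) hne
    · simp [h1, h2, sum_ceW, hne]
    · simp [h1, h2, sum_ceW, Ne.symm hne]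
    · simp [h1, h2, sum_ceW]
  simp only [key] at h
  rw [h]
  rw [Finset.prod_congr rfl (fun i _ => rhs i), Finset.prod_mul_distrib]
  simp [Finset.prod_ite_eq' Finset.univ i0 (fun _ => ∑ z, ceW D z * g z),
    Finset.prod_ite_eq' Finset.univ j0 (fun _ => ∑ z, ceW D z * g' z)]

def ceMean (D : PMF (Bool × Bool)) : ℝ := ∑ z, ceW D z * ceφ z

lemma ceP_eq_mean (D : PMF (Bool × Bool)) : ceP D = ceMean D := by
  rw [ceP, ceQ, ENNReal.toReal_add (PMF.apply_ne_top _ _) (PMF.apply_ne_top _ _)]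
  rw [ceMean]
  simp [Fintype.sum_prod_type, ceW, ceφ]

lemma mean_zero (D : PMF (Bool × Bool)) : ∑ z, ceW D z * (ceφ z - ceMean D) = 0 := by
  have : ∀ z, ceW D z * (ceφ z - ceMean D) = ceW D z * ceφ z - ceMean D * ceW D z := by
    intro z; ring
  rw [Finset.sum_congr rfl (fun z _ => this z), Finset.sum_sub_distrib, ← Finset.mul_sum,
    sum_ceW, mul_one, ceMean, sub_self]

lemma var_eq (D : PMF (Bool × Bool)) :
    ∑ z, ceW D z * (ceφ z - ceMean D)^2 = ceMean D - (ceMean D)^2 := by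
  have hφ : ∀ z : Bool × Bool, (ceφ z)^2 = ceφ z := by
    intro z; by_cases h : z.1 = true <;> simp [ceφ, h]
  have expand : ∀ z, ceW D z * (ceφ z - ceMean D)^2 =
      ceW D z * ceφ z - 2 * ceMean D * (ceW D z * ceφ z) + (ceMean D)^2 * ceW D z := by
    intro z; linear_combination ceW D z * hφ z
  rw [Finset.sum_congr rfl (fun z _ => expand z), Finset.sum_add_distrib,
    Finset.sum_sub_distrib, ← Finset.mul_sum, ← Finset.mul_sum, sum_ceW, ← ceMean]
  ring

lemma second_moment (D : PMF (Bool × Bool)) (m : ℕ) :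
    ∑ S : Fin m → Bool × Bool, ceProd D S * ((∑ i, ceφ (S i)) - m * ceMean D)^2
      = m * (ceMean D - (ceMean D)^2) := by
  set p := ceMean D with hp
  have hdev : ∀ S : Fin m → Bool × Bool,
      ((∑ i, ceφ (S i)) - m * p) = ∑ i, (ceφ (S i) - p) := by
    intro S
    rw [Finset.sum_sub_distrib, Finset.sum_const, Finset.card_univ, Fintype.card_fin,
      nsmul_eq_mul]
  have hsq : ∀ S : Fin m → Bool × Bool, ((∑ i, ceφ (S i)) - m * p)^2
      = ∑ i, ∑ j, (ceφ (S i) - p) * (ceφ (S j) - p) := by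
    intro S; rw [hdev S, sq, Finset.sum_mul_sum]
  calc ∑ S : Fin m → Bool × Bool, ceProd D S * ((∑ i, ceφ (S i)) - m * p)^2
      = ∑ S : Fin m → Bool × Bool, ∑ i, ∑ j, ceProd D S * ((ceφ (S i) - p) * (ceφ (S j) - p)) := by
        refine Finset.sum_congr rfl fun S _ => ?_
        rw [hsq S, Finset.mul_sum]
        exact Finset.sum_congr rfl fun i _ => Finset.mul_sum _ _ _
    _ = ∑ i : Fin m, ∑ j : Fin m, ∑ S : Fin m → Bool × Bool,
          ceProd D S * ((ceφ (S i) - p) * (ceφ (S j) - p)) := by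
        rw [Finset.sum_comm]
        exact Finset.sum_congr rfl fun i _ => Finset.sum_comm
    _ = ∑ i : Fin m, ∑ j : Fin m, (if i = j then p - p^2 else 0) := by
        refine Finset.sum_congr rfl fun i _ => Finset.sum_congr rfl fun j _ => ?_
        by_cases hij : i = j
        · subst hij
          rw [if_pos rfl]
          calc ∑ S : Fin m → Bool × Bool, ceProd D S * ((ceφ (S i) - p) * (ceφ (S i) - p))
              = ∑ S : Fin m → Bool × Bool, ceProd D S * (fun z => (ceφ z - p)^2) (S i) := by
                refine Finset.sum_congr rfl fun S _ => ?_
                simp only [sq]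
            _ = ∑ z, ceW D z * (fun z => (ceφ z - p)^2) z := exp_single D (fun z => (ceφ z - p)^2) i
            _ = p - p^2 := var_eq D
        · rw [if_neg hij]
          calc ∑ S : Fin m → Bool × Bool, ceProd D S * ((ceφ (S i) - p) * (ceφ (S j) - p))
              = ∑ S : Fin m → Bool × Bool,
                  ceProd D S * ((fun z => ceφ z - p) (S i) * (fun z => ceφ z - p) (S j)) := rfl
            _ = (∑ z, ceW D z * (ceφ z - p)) * (∑ z, ceW D z * (ceφ z - p)) :=
                exp_pair D (fun z => ceφ z - p) (fun z => ceφ z - p) i j hij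
            _ = 0 := by rw [mean_zero]; ring
    _ = m * (p - p^2) := by
        simp [Finset.sum_ite_eq, Finset.card_univ]; ring

lemma cheb (D : PMF (Bool × Bool)) {m : ℕ} (hm : m ≠ 0) {ε' : ℝ} (hε' : 0 < ε') :
    ∑ S ∈ Finset.univ.filter
        (fun S : Fin m → Bool × Bool => ε' < |(∑ i, ceφ (S i)) / m - ceMean D|),
      ceProd D S ≤ 1 / (4 * m * ε'^2) := by
  set p := ceMean D with hp
  have hm' : (0:ℝ) < m := Nat.cast_pos.mpr (Nat.pos_of_ne_zero hm)
  have key : ∀ S ∈ Finset.univ.filter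
      (fun S : Fin m → Bool × Bool => ε' < |(∑ i, ceφ (S i)) / m - p|),
      ceProd D S ≤ ceProd D S * (((∑ i, ceφ (S i)) - m * p)^2 / (m * ε')^2) := by
    intro S hS
    rw [Finset.mem_filter] at hS
    have h0 : (∑ i, ceφ (S i)) / m - p = ((∑ i, ceφ (S i)) - m * p) / m := by
      field_simp
    have h1 : m * ε' < |(∑ i, ceφ (S i)) - m * p| := by
      have h2 := hS.2
      rw [h0, abs_div, abs_of_pos hm'] at h2
      have := (lt_div_iff₀ hm').mp h2
      linarith [this]
    have h2 : (m * ε')^2 < ((∑ i, ceφ (S i)) - m * p)^2 := by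
      have habs : ((∑ i, ceφ (S i)) - m * p)^2 = |(∑ i, ceφ (S i)) - m * p|^2 := (sq_abs _).symm
      rw [habs]
      exact pow_lt_pow_left₀ h1 (by positivity) (by norm_num)
    have hratio : 1 ≤ ((∑ i, ceφ (S i)) - m * p)^2 / (m * ε')^2 := by
      rw [le_div_iff₀ (by positivity), one_mul]
      exact le_of_lt h2
    exact le_mul_of_one_le_right (ceProd_nonneg D S) hratio
  calc ∑ S ∈ Finset.univ.filter
        (fun S : Fin m → Bool × Bool => ε' < |(∑ i, ceφ (S i)) / m - p|), ceProd D S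
      ≤ ∑ S ∈ Finset.univ.filter
        (fun S : Fin m → Bool × Bool => ε' < |(∑ i, ceφ (S i)) / m - p|),
          ceProd D S * (((∑ i, ceφ (S i)) - m * p)^2 / (m * ε')^2) := Finset.sum_le_sum key
    _ ≤ ∑ S : Fin m → Bool × Bool,
          ceProd D S * (((∑ i, ceφ (S i)) - m * p)^2 / (m * ε')^2) := by
        refine Finset.sum_le_sum_of_subset_of_nonneg (Finset.filter_subset _ _) ?_
        intro S _ _
        exact mul_nonneg (ceProd_nonneg D S) (by positivity)
    _ = (∑ S : Fin m → Bool × Bool, ceProd D S * ((∑ i, ceφ (S i)) - m * p)^2) / (m * ε')^2 := by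
        rw [Finset.sum_div]
        exact Finset.sum_congr rfl fun S _ => (mul_div_assoc _ _ _).symm
    _ = (m * (p - p^2)) / (m * ε')^2 := by rw [second_moment]
    _ ≤ 1 / (4 * m * ε'^2) := by
        rw [div_le_div_iff₀ (by positivity) (by positivity)]
        have hsq : (2*p - 1)^2 ≥ 0 := sq_nonneg _
        nlinarith [sq_nonneg (m * ε'), mul_pos hm' (mul_pos hm' (mul_pos hε' hε'))]

end CE

section CE2

lemma ceP_empDist {m : ℕ} (hm : m ≠ 0) (S : Fin m → Bool × Bool) :
    ceP (empDist hm S) = (∑ i, ceφ (S i)) / m := by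
  haveI : NeZero m := ⟨hm⟩
  have happ : ∀ z : Bool × Bool, empDist hm S z = ∑ i, (if z = S i then (m:ℝ≥0∞)⁻¹ else 0) := by
    intro z
    rw [empDist, PMF.map_apply, tsum_fintype]
    refine Finset.sum_congr rfl fun i _ => ?_
    rw [PMF.uniformOfFintype_apply]
    simp
  have hinv : ((m:ℝ≥0∞))⁻¹ ≠ ⊤ := ENNReal.inv_ne_top.mpr (by exact_mod_cast hm)
  rw [ceP, ceQ, happ, happ, ← Finset.sum_add_distrib]
  have step : ∀ i : Fin m,
      ((if ((true,true) : Bool × Bool) = S i then (m:ℝ≥0∞)⁻¹ else 0)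
        + (if ((true,false) : Bool × Bool) = S i then (m:ℝ≥0∞)⁻¹ else 0))
      = (if (S i).1 = true then (m:ℝ≥0∞)⁻¹ else 0) := by
    intro i
    rcases hS : S i with ⟨x, y⟩
    cases x <;> cases y <;> simp
  rw [Finset.sum_congr rfl fun i _ => step i]
  rw [ENNReal.toReal_sum (fun i _ => by split <;> simp [hinv])]
  have conv : ∀ i : Fin m, ((if (S i).1 = true then (m:ℝ≥0∞)⁻¹ else 0)).toReal
      = ceφ (S i) * (m:ℝ)⁻¹ := by
    intro i
    by_cases h : (S i).1 = true <;> simp [h, ceφ, ENNReal.toReal_inv]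
  rw [Finset.sum_congr rfl fun i _ => conv i, ← Finset.sum_mul, div_eq_mul_inv]

lemma iidProb_eq_filter {m : ℕ} (D : PMF (Bool × Bool)) (E : Set (Fin m → Bool × Bool)) :
    iidProb D E = ∑ S ∈ Finset.univ.filter (fun S => S ∈ E), ∏ i, D (S i) := by
  rw [iidProb, tsum_fintype, Finset.sum_filter]
  exact Finset.sum_congr rfl fun S _ => Set.indicator_apply E _ S

lemma prod_D_ne_top {m : ℕ} (D : PMF (Bool × Bool)) (S : Fin m → Bool × Bool) :
    (∏ i, D (S i)) ≠ ⊤ :=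
  (ENNReal.prod_lt_top (fun i _ => (PMF.apply_ne_top D (S i)).lt_top)).ne

lemma prod_D_toReal {m : ℕ} (D : PMF (Bool × Bool)) (S : Fin m → Bool × Bool) :
    (∏ i, D (S i)).toReal = ceProd D S := by
  rw [ENNReal.toReal_prod]; rfl

lemma sum_prod_D_eq_one (D : PMF (Bool × Bool)) (m : ℕ) :
    ∑ S : Fin m → Bool × Bool, ∏ i, D (S i) = 1 := by
  have h2 : ∑ S : Fin m → Bool × Bool, ∏ i, D (S i) = ∏ _i : Fin m, ∑ z : Bool × Bool, D z :=
    (Fintype.prod_sum (fun (_ : Fin m) (z : Bool × Bool) => D z)).symm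
  rw [h2]
  simp [sum_D_eq_one]

def ceM : ℝ → ℝ → ℕ → ℕ := fun ε δ _ => ⌈(9:ℝ)/(ε^2*δ)⌉₊

lemma ceM_poly : PolyBound3 ceM := by
  refine ⟨10, 3, fun ε δ hε hδ k => ?_⟩
  obtain ⟨hε0, hε1⟩ := hε
  obtain ⟨hδ0, hδ1⟩ := hδ
  have ha : 1 ≤ 1/ε := by rw [le_div_iff₀ hε0]; linarith
  have hb : 1 ≤ 1/δ := by rw [le_div_iff₀ hδ0]; linarith
  have hc : 0 ≤ Real.log k := Real.log_natCast_nonneg k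
  have hceil : (ceM ε δ k : ℝ) ≤ 9/(ε^2*δ) + 1 := by
    rw [ceM]
    exact (Nat.ceil_lt_add_one (by positivity)).le
  have hεne : ε ≠ 0 := ne_of_gt hε0
  have hδne : δ ≠ 0 := ne_of_gt hδ0
  have hEq : 9/(ε^2*δ) = 9 * ((1/ε) * (1/ε) * (1/δ)) := by
    rw [sq]
    field_simp
  refine hceil.trans ?_
  rw [hEq]
  set t := 1/ε + 1/δ + Real.log k + 1 with htdef
  have hta : 1/ε ≤ t := by simp only [htdef]; linarith
  have htb : 1/δ ≤ t := by simp only [htdef]; linarith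
  have ht1 : 1 ≤ t := by simp only [htdef]; linarith
  have hεp : 0 < 1/ε := lt_of_lt_of_le one_pos ha
  have hδp : 0 < 1/δ := lt_of_lt_of_le one_pos hb
  have h1 : (1/ε) * (1/ε) ≤ t * t := mul_le_mul hta hta (le_of_lt hεp) (by linarith)
  have hcube : (1/ε) * (1/ε) * (1/δ) ≤ t * t * t :=
    mul_le_mul h1 htb (le_of_lt hδp) (by nlinarith)
  have ht3 : 1 ≤ t * t * t := by nlinarith
  have : t * t * t = t ^ 3 := by ring
  nlinarith

lemma ceLoss_UC : UniformConvergence ceLoss := by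
  refine ⟨ceM, ceM_poly, ?_⟩
  intro H ε δ hε hδ D m hm hMm
  obtain ⟨hε0, hε1⟩ := hε
  obtain ⟨hδ0, hδ1⟩ := hδ
  have hm' : (0:ℝ) < m := Nat.cast_pos.mpr (Nat.pos_of_ne_zero hm)
  have hε' : 0 < ε/3 := by linarith
  set Good : Set (Fin m → Bool × Bool) :=
    {S | ∀ h ∈ H, |(ceLoss.loss (empDist hm S) h : ℝ) - (ceLoss.loss D h : ℝ)| ≤ ε} with hGood
  set Bad : Finset (Fin m → Bool × Bool) :=
    Finset.univ.filter (fun S => ε/3 < |(∑ i, ceφ (S i)) / m - ceMean D|) with hBad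
  -- Bad has small probability (real bound)
  have hmR : (9:ℝ)/(ε^2*δ) ≤ m := by
    have := Nat.ceil_le.mp hMm
    exact this
  have hbadR : ∑ S ∈ Bad, ceProd D S ≤ δ := by
    refine (cheb D hm hε').trans ?_
    rw [div_le_iff₀ (by positivity)]
    rw [div_le_iff₀ (by positivity)] at hmR
    nlinarith [hmR, mul_pos (mul_pos hε0 hε0) hδ0]
  -- Bad probability in ℝ≥0∞
  have hbadE : ∑ S ∈ Bad, ∏ i, D (S i) ≤ ENNReal.ofReal δ := by
    have hne : (∑ S ∈ Bad, ∏ i, D (S i)) ≠ ⊤ :=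
      (ENNReal.sum_lt_top.mpr (fun S _ => (prod_D_ne_top D S).lt_top)).ne
    rw [← ENNReal.ofReal_toReal hne]
    apply ENNReal.ofReal_le_ofReal
    rw [ENNReal.toReal_sum (fun S _ => prod_D_ne_top D S)]
    rw [Finset.sum_congr rfl (fun S _ => prod_D_toReal D S)]
    exact hbadR
  -- complement of Bad is inside Good
  have hsub : Finset.univ.filter (fun S => S ∉ Good) ⊆ Bad := by
    intro S hS
    rw [Finset.mem_filter] at hS
    rw [hBad, Finset.mem_filter]
    refine ⟨Finset.mem_univ S, ?_⟩
    by_contra hnb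
    push_neg at hnb
    apply hS.2
    intro h hh
    have hdiff := ceVal_diff_le D (empDist hm S) h
    have hcoe : (ceLoss.loss (empDist hm S) h : ℝ) = ceVal (empDist hm S) h := rfl
    have hcoe2 : (ceLoss.loss D h : ℝ) = ceVal D h := rfl
    rw [hcoe, hcoe2]
    have hpe : ceP (empDist hm S) = (∑ i, ceφ (S i)) / m := ceP_empDist hm S
    have hpd : ceP D = ceMean D := ceP_eq_mean D
    calc |ceVal (empDist hm S) h - ceVal D h| ≤ 3 * |ceP (empDist hm S) - ceP D| := hdiff
      _ = 3 * |(∑ i, ceφ (S i)) / m - ceMean D| := by rw [hpe, hpd]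
      _ ≤ 3 * (ε/3) := by linarith [hnb]
      _ = ε := by ring
  -- assemble
  rw [tsub_le_iff_right]
  have hsplit : (∑ S ∈ Finset.univ.filter (fun S => S ∈ Good), ∏ i, D (S i))
      + (∑ S ∈ Finset.univ.filter (fun S => S ∉ Good), ∏ i, D (S i)) = 1 := by
    rw [Finset.sum_filter_add_sum_filter_not]
    exact sum_prod_D_eq_one D m
  have h1 : (1:ℝ≥0∞) ≤ iidProb D Good + ENNReal.ofReal δ := by
    rw [← hsplit, iidProb_eq_filter]
    have hbound : (∑ S ∈ Finset.univ.filter (fun S => S ∉ Good), ∏ i, D (S i)) ≤ ENNReal.ofReal δ :=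
      calc ∑ S ∈ Finset.univ.filter (fun S => S ∉ Good), ∏ i, D (S i)
          ≤ ∑ S ∈ Bad, ∏ i, D (S i) := Finset.sum_le_sum_of_subset hsub
        _ ≤ ENNReal.ofReal δ := hbadE
    exact add_le_add (le_of_eq (by congr)) hbound
  exact h1

end CE2

section CE3

lemma ceLoss_coe (D : PMF (Bool × Bool)) (h : Bool → unitInterval) :
    (ceLoss.loss D h : ℝ) = ceVal D h := rfl

theorem exists_incompatible_loss' :
    ∃ (X : Type) (L : LossFunction X), UniformConvergence L ∧
      ∃ D : PMF (X × Bool), (Supp D).Finite ∧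
        ∃ (H : Finset (X → unitInterval)) (G : Finset (Set X)) (ε : ℝ),
          0 < ε ∧ H.Nonempty ∧
          (∀ g ∈ G, ∃ z : X × Bool, z.1 ∈ g ∧ D z ≠ 0) ∧
          ¬ ∃ h : X → unitInterval, ∀ g ∈ G,
              ∀ (hg : ∃ z : X × Bool, z.1 ∈ g ∧ D z ≠ 0),
              ∀ h' ∈ H,
                (L.loss (condOn D g hg) h : ℝ) ≤ (L.loss (condOn D g hg) h' : ℝ) + ε := by
  classical
  set D := PMF.uniformOfFintype (Bool × Bool) with hD
  have hDz : ∀ z : Bool × Bool, D z = 4⁻¹ := by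
    intro z
    rw [hD, PMF.uniformOfFintype_apply]
    norm_num
  set g1 : Set Bool := {true} with hg1def
  set g2 : Set Bool := Set.univ with hg2def
  have hg1 : ∃ z : Bool × Bool, z.1 ∈ g1 ∧ D z ≠ 0 :=
    ⟨(true, true), by simp [hg1def], by simp [hDz]⟩
  have hg2 : ∃ z : Bool × Bool, z.1 ∈ g2 ∧ D z ≠ 0 :=
    ⟨(true, true), by simp [hg2def], by simp [hDz]⟩
  -- conditional on g1 has ceP = 1
  have hT1 : (∑' z : Bool × Bool, ({z : Bool × Bool | z.1 ∈ g1}).indicator D z) = 4⁻¹ + 4⁻¹ := by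
    rw [tsum_fintype]
    simp [Fintype.sum_prod_type, Set.indicator_apply, hg1def, hDz]
  have hfour : ((4:ℝ≥0∞)⁻¹ + 4⁻¹) ≠ 0 := by simp
  have hfourtop : ((4:ℝ≥0∞)⁻¹ + 4⁻¹) ≠ ⊤ := by simp
  have hp1 : ceP (condOn D g1 hg1) = 1 := by
    have hf1 : ∀ z, condOn D g1 hg1 z = ({z : Bool × Bool | z.1 ∈ g1}).indicator D z *
        (∑' z, ({z : Bool × Bool | z.1 ∈ g1}).indicator D z)⁻¹ :=
      fun z => PMF.filter_apply (p := D) (s := {z : Bool × Bool | z.1 ∈ g1}) hg1 z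
    rw [ceP, ceQ, hf1, hf1, hT1]
    have e1 : ({z : Bool × Bool | z.1 ∈ g1}).indicator D (true, true) = 4⁻¹ := by
      simp [Set.indicator_apply, hg1def, hDz]
    have e2 : ({z : Bool × Bool | z.1 ∈ g1}).indicator D (true, false) = 4⁻¹ := by
      simp [Set.indicator_apply, hg1def, hDz]
    rw [e1, e2, ← add_mul, ENNReal.mul_inv_cancel hfour hfourtop]
    simp
  -- conditional on g2 has ceP = 1/2
  have hT2 : (∑' z : Bool × Bool, ({z : Bool × Bool | z.1 ∈ g2}).indicator D z) = 1 := by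
    have : ({z : Bool × Bool | z.1 ∈ g2}) = Set.univ := by
      ext z; simp [hg2def]
    rw [this, Set.indicator_univ]
    exact D.tsum_coe
  have hp2 : ceP (condOn D g2 hg2) = 1/2 := by
    have hf2 : ∀ z, condOn D g2 hg2 z = ({z : Bool × Bool | z.1 ∈ g2}).indicator D z *
        (∑' z, ({z : Bool × Bool | z.1 ∈ g2}).indicator D z)⁻¹ :=
      fun z => PMF.filter_apply (p := D) (s := {z : Bool × Bool | z.1 ∈ g2}) hg2 z
    rw [ceP, ceQ, hf2, hf2, hT2]
    have e1 : ({z : Bool × Bool | z.1 ∈ g2}).indicator D (true, true) = 4⁻¹ := by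
      simp [Set.indicator_apply, hg2def, hDz]
    have e2 : ({z : Bool × Bool | z.1 ∈ g2}).indicator D (true, false) = 4⁻¹ := by
      simp [Set.indicator_apply, hg2def, hDz]
    rw [e1, e2]
    simp only [inv_one, mul_one]
    rw [ENNReal.toReal_add (by simp) (by simp), ENNReal.toReal_inv]
    norm_num
  have htgt1 : ceTgt 1 = 0 := by rw [ceTgt]; norm_num
  have htgt2 : ceTgt (1/2) = 1 := by rw [ceTgt]; norm_num
  refine ⟨Bool, ceLoss, ceLoss_UC, D, Set.toFinite _,
    {(fun _ => (0:unitInterval)), (fun _ => (1:unitInterval))}, {g1, g2}, 1/8,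
    by norm_num, ⟨_, Finset.mem_insert_self _ _⟩, ?_, ?_⟩
  · intro g hgG
    rcases Finset.mem_insert.mp hgG with rfl | hgG'
    · exact hg1
    · rw [Finset.mem_singleton] at hgG'
      subst hgG'
      exact hg2
  · rintro ⟨h, hcl⟩
    have hmem1 : (fun _ => (0:unitInterval)) ∈
        ({(fun _ => (0:unitInterval)), (fun _ => (1:unitInterval))} : Finset (Bool → unitInterval)) :=
      Finset.mem_insert_self _ _
    have hmem2 : (fun _ => (1:unitInterval)) ∈
        ({(fun _ => (0:unitInterval)), (fun _ => (1:unitInterval))} : Finset (Bool → unitInterval)) :=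
      Finset.mem_insert_of_mem (Finset.mem_singleton_self _)
    have hG1 : g1 ∈ ({g1, g2} : Finset (Set Bool)) := Finset.mem_insert_self _ _
    have hG2 : g2 ∈ ({g1, g2} : Finset (Set Bool)) :=
      Finset.mem_insert_of_mem (Finset.mem_singleton_self _)
    have k1 := hcl g1 hG1 hg1 (fun _ => (0:unitInterval)) hmem1
    have k2 := hcl g2 hG2 hg2 (fun _ => (1:unitInterval)) hmem2
    rw [ceLoss_coe, ceLoss_coe] at k1 k2
    rw [ceVal, ceVal, hp1, htgt1] at k1
    rw [ceVal, ceVal, hp2, htgt2] at k2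
    have hht0 : (0:ℝ) ≤ (h true : ℝ) := (h true).2.1
    have hht1 : (h true : ℝ) ≤ 1 := (h true).2.2
    have c0 : (((fun _ => (0:unitInterval)) true : unitInterval) : ℝ) = 0 := rfl
    have c1 : (((fun _ => (1:unitInterval)) true : unitInterval) : ℝ) = 1 := rfl
    rw [c0] at k1
    rw [c1] at k2
    have a1 : |(h true : ℝ) - 0| = (h true : ℝ) := by rw [sub_zero, abs_of_nonneg hht0]
    have a2 : |(h true : ℝ) - 1| = 1 - (h true : ℝ) := by
      rw [abs_of_nonpos (by linarith)]; ring
    rw [a1] at k1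
    rw [a2] at k2
    simp only [sub_zero, abs_zero, sub_self] at k1 k2
    -- k1 : 1 * h true ≤ 1 * 0 + 1/8 ; k2 : (1/2)*(1 - h true) ≤ (1/2)*0 + 1/8
    nlinarith [k1, k2]

end CE3

/-- There exist a feature space `X`, a loss function `L` over `X` with the
uniform convergence property, a finitely supported distribution `D`, a finite nonempty set `H`
of predictors, a finite collection `G` of subgroups each of positive probability, and `ε > 0`,
such that no predictor is `ε`-competitive with the best hypothesis in `H` simultaneously for
all groups in `G`. -/
theorem exists_incompatible_loss :
    ∃ (X : Type) (L : LossFunction X), UniformConvergence L ∧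
      ∃ D : PMF (X × Bool), (Supp D).Finite ∧
        ∃ (H : Finset (X → unitInterval)) (G : Finset (Set X)) (ε : ℝ),
          0 < ε ∧ H.Nonempty ∧
          (∀ g ∈ G, ∃ z : X × Bool, z.1 ∈ g ∧ D z ≠ 0) ∧
          ¬ ∃ h : X → unitInterval, ∀ g ∈ G,
              ∀ (hg : ∃ z : X × Bool, z.1 ∈ g ∧ D z ≠ 0),
              ∀ h' ∈ H,
                (L.loss (condOn D g hg) h : ℝ) ≤ (L.loss (condOn D g hg) h' : ℝ) + ε := by
  exact exists_incompatible_loss'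

end MultiPAC
end
end

section
/- In the three-point instance, if ε > 0 satisfies ε < 7b/9, ε < b/2, and b/9 + ε < 16a/81, then there is no predictor h : X → [0,1] satisfying both L_{D_S}(h) ≤ b/9 + ε and L_{D_T}(h) ≤ ε. -/
open scoped ENNReal
open scoped Classical

noncomputable section

namespace MultiPAC

variable {X : Type*}

/-- Probability of the event `E` for a pair drawn i.i.d. from `DX`. -/
def prPair {X : Type*} (DX : PMF X) (E : Set (X × X)) : ℝ≥0∞ :=
  ∑' p : X × X, E.indicator (fun q => DX q.1 * DX q.2) p

/-- The individual-fairness + accuracy loss: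
`L_{D}(h) = a · Pr_{x,x' ~ D_X}[h x ≠ h x' ∧ d(x,x') = 0] + b · Pr_{(x,y) ~ D}[h x ≠ y]`,
where the binary metric `d` takes values in `{0,1}` encoded as `Bool` (`false` = 0). -/
def ifLoss (d : X × X → Bool) (a b : ℝ) (D : PMF (X × Bool)) (h : X → unitInterval) : ℝ :=
  a * (prPair (D.map Prod.fst) {p : X × X | h p.1 ≠ h p.2 ∧ d p = false}).toReal +
    b * (D.toOuterMeasure {z : X × Bool | (h z.1 : ℝ) ≠ (if z.2 then 1 else 0)}).toReal

private lemma toOM_ne_top {α : Type*} (p : PMF α) (E : Set α) : p.toOuterMeasure E ≠ ⊤ := by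
  refine ne_top_of_le_ne_top ENNReal.one_ne_top ?_
  rw [PMF.toOuterMeasure_apply]
  calc ∑' x, E.indicator p x ≤ ∑' x, p x :=
        ENNReal.tsum_le_tsum (fun x => Set.indicator_le_self _ _ x)
    _ = 1 := p.tsum_coe

private lemma point_le_toOM {α : Type*} (p : PMF α) (E : Set α) (z : α) (hz : z ∈ E) :
    p z ≤ p.toOuterMeasure E := by
  rw [PMF.toOuterMeasure_apply]
  have := ENNReal.le_tsum (f := fun x => E.indicator p x) z
  simpa [Set.indicator_of_mem hz] using this

private lemma prPair_ne_top {α : Type*} (DX : PMF α) (E : Set (α × α)) : prPair DX E ≠ ⊤ := by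
  refine ne_top_of_le_ne_top ENNReal.one_ne_top ?_
  unfold prPair
  calc ∑' q : α × α, E.indicator (fun q => DX q.1 * DX q.2) q
      ≤ ∑' q : α × α, DX q.1 * DX q.2 :=
        ENNReal.tsum_le_tsum fun q => Set.indicator_le_self _ _ q
    _ = 1 := by
        rw [ENNReal.tsum_prod']
        simp [ENNReal.tsum_mul_left, DX.tsum_coe]

private lemma two_le_prPair {α : Type*} (DX : PMF α) (E : Set (α × α)) (q q' : α × α)
    (hq : q ∈ E) (hq' : q' ∈ E) (hne : q ≠ q') :
    DX q.1 * DX q.2 + DX q'.1 * DX q'.2 ≤ prPair DX E := by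
  have := ENNReal.sum_le_tsum (f := fun p => E.indicator (fun r => DX r.1 * DX r.2) p)
    ({q, q'} : Finset (α × α))
  rw [Finset.sum_pair hne] at this
  simpa [prPair, Set.indicator_of_mem hq, Set.indicator_of_mem hq'] using this

private lemma acc_le_ifLoss {α : Type*} (d : α × α → Bool) (a b : ℝ) (ha : 0 ≤ a) (hb : 0 ≤ b)
    (p : PMF (α × Bool)) (h : α → unitInterval) (z : α × Bool)
    (hz : (h z.1 : ℝ) ≠ (if z.2 then 1 else 0)) :
    b * (p z).toReal ≤ ifLoss d a b p h := by
  unfold ifLoss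
  have h1 : b * (p z).toReal ≤
      b * (p.toOuterMeasure {z : α × Bool | (h z.1 : ℝ) ≠ (if z.2 then 1 else 0)}).toReal := by
    apply mul_le_mul_of_nonneg_left _ hb
    exact ENNReal.toReal_mono (toOM_ne_top _ _) (point_le_toOM _ _ _ hz)
  have h2 : 0 ≤ a * (prPair (p.map Prod.fst)
      {q : α × α | h q.1 ≠ h q.2 ∧ d q = false}).toReal :=
    mul_nonneg ha ENNReal.toReal_nonneg
  linarith

private lemma fair_le_ifLoss {α : Type*} (d : α × α → Bool) (a b : ℝ) (ha : 0 ≤ a) (hb : 0 ≤ b)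
    (p : PMF (α × Bool)) (h : α → unitInterval) (q q' : α × α)
    (hq : h q.1 ≠ h q.2 ∧ d q = false) (hq' : h q'.1 ≠ h q'.2 ∧ d q' = false) (hne : q ≠ q') :
    a * ((p.map Prod.fst) q.1 * (p.map Prod.fst) q.2
        + (p.map Prod.fst) q'.1 * (p.map Prod.fst) q'.2).toReal ≤ ifLoss d a b p h := by
  unfold ifLoss
  have h1 : a * ((p.map Prod.fst) q.1 * (p.map Prod.fst) q.2
        + (p.map Prod.fst) q'.1 * (p.map Prod.fst) q'.2).toReal ≤
      a * (prPair (p.map Prod.fst) {q : α × α | h q.1 ≠ h q.2 ∧ d q = false}).toReal := by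
    apply mul_le_mul_of_nonneg_left _ ha
    exact ENNReal.toReal_mono (prPair_ne_top _ _) (two_le_prPair _ _ q q' hq hq' hne)
  have h2 : 0 ≤ b * (p.toOuterMeasure
      {z : α × Bool | (h z.1 : ℝ) ≠ (if z.2 then 1 else 0)}).toReal :=
    mul_nonneg hb ENNReal.toReal_nonneg
  linarith

/-- In the three-point instance, if `ε > 0` satisfies `ε < 7b/9`, `ε < b/2`
and `b/9 + ε < 16a/81`, then no predictor `h : X → [0,1]` satisfies both
`L_{D_S}(h) ≤ b/9 + ε` and `L_{D_T}(h) ≤ ε`. -/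
theorem three_point_no_multi_pac (a b : ℝ) (ha : 0 < a) (hb : 0 < b)
    (d : Fin 3 × Fin 3 → Bool)
    (hd_refl : ∀ x : Fin 3, d (x, x) = false)
    (hd_symm : ∀ x y : Fin 3, d (x, y) = d (y, x))
    (hd02 : d (0, 2) = false) (hd01 : d (0, 1) = true) (hd12 : d (1, 2) = true)
    (D : PMF (Fin 3 × Bool))
    (hD0 : D (0, false) = 8/10) (hD1 : D (1, true) = 1/10) (hD2 : D (2, true) = 1/10)
    (hD0' : D (0, true) = 0) (hD1' : D (1, false) = 0) (hD2' : D (2, false) = 0)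
    (hS : ∃ z : Fin 3 × Bool, z.1 ∈ ({0, 2} : Set (Fin 3)) ∧ D z ≠ 0)
    (hT : ∃ z : Fin 3 × Bool, z.1 ∈ ({1, 2} : Set (Fin 3)) ∧ D z ≠ 0)
    (ε : ℝ) (hε : 0 < ε) (hε1 : ε < 7 * b / 9) (hε2 : ε < b / 2)
    (hε3 : b / 9 + ε < 16 * a / 81) :
    ¬ ∃ h : Fin 3 → unitInterval,
        ifLoss d a b (condOn D {0, 2} hS) h ≤ b / 9 + ε ∧
        ifLoss d a b (condOn D {1, 2} hT) h ≤ ε := by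
  rintro ⟨h, hLS, hLT⟩
  -- normalizing constants
  have hNT : (∑' z : Fin 3 × Bool,
      ({z : Fin 3 × Bool | z.1 ∈ ({1, 2} : Set (Fin 3))}).indicator D z) = 5⁻¹ := by
    rw [tsum_fintype, Fintype.sum_prod_type]
    simp [Fin.sum_univ_three, Set.indicator_apply, hD0, hD1, hD2, hD0', hD1', hD2']
    have : ((10:ℝ≥0∞)⁻¹ + 10⁻¹).toReal = ((5:ℝ≥0∞)⁻¹).toReal := by
      rw [ENNReal.toReal_add (by simp [ENNReal.add_eq_top, ENNReal.mul_eq_top, ENNReal.div_eq_top]) (by simp [ENNReal.add_eq_top, ENNReal.mul_eq_top, ENNReal.div_eq_top])]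
      simp [ENNReal.toReal_inv]; norm_num
    exact (ENNReal.toReal_eq_toReal_iff' (by simp [ENNReal.add_eq_top, ENNReal.mul_eq_top, ENNReal.div_eq_top]) (by simp [ENNReal.add_eq_top, ENNReal.mul_eq_top, ENNReal.div_eq_top])).mp this
  have hNS : (∑' z : Fin 3 × Bool,
      ({z : Fin 3 × Bool | z.1 ∈ ({0, 2} : Set (Fin 3))}).indicator D z) = 9/10 := by
    rw [tsum_fintype, Fintype.sum_prod_type]
    simp [Fin.sum_univ_three, Set.indicator_apply, hD0, hD1, hD2, hD0', hD1', hD2']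
    have : ((8/10 : ℝ≥0∞) + 10⁻¹).toReal = ((9/10:ℝ≥0∞)).toReal := by
      rw [ENNReal.toReal_add (by simp [ENNReal.add_eq_top, ENNReal.mul_eq_top, ENNReal.div_eq_top]) (by simp [ENNReal.add_eq_top, ENNReal.mul_eq_top, ENNReal.div_eq_top])]
      simp [ENNReal.toReal_inv, ENNReal.toReal_div]; norm_num
    exact (ENNReal.toReal_eq_toReal_iff' (by simp [ENNReal.add_eq_top, ENNReal.mul_eq_top, ENNReal.div_eq_top]) (by simp [ENNReal.add_eq_top, ENNReal.mul_eq_top, ENNReal.div_eq_top])).mp this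
  -- values of the conditioned PMFs
  have hDT1 : (condOn D {1, 2} hT) (1, true) = (10:ℝ≥0∞)⁻¹ * (5⁻¹)⁻¹ := by
    rw [condOn]; erw [PMF.filter_apply]; rw [hNT, Set.indicator_of_mem (by simp)]
    rw [hD1]; norm_num
  have hDT2 : (condOn D {1, 2} hT) (2, true) = (10:ℝ≥0∞)⁻¹ * (5⁻¹)⁻¹ := by
    rw [condOn]; erw [PMF.filter_apply]; rw [hNT, Set.indicator_of_mem (by simp)]
    rw [hD2]; norm_num
  have hDT1r : ((condOn D {1, 2} hT) (1, true)).toReal = 1/2 := by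
    rw [hDT1]; simp [ENNReal.toReal_mul, ENNReal.toReal_inv]; norm_num
  have hDT2r : ((condOn D {1, 2} hT) (2, true)).toReal = 1/2 := by
    rw [hDT2]; simp [ENNReal.toReal_mul, ENNReal.toReal_inv]; norm_num
  have hDS0 : (condOn D {0, 2} hS) (0, false) = (8/10 : ℝ≥0∞) * (9/10)⁻¹ := by
    rw [condOn]; erw [PMF.filter_apply]; rw [hNS, Set.indicator_of_mem (by simp)]
    rw [hD0]
  have hDS0r : ((condOn D {0, 2} hS) (0, false)).toReal = 8/9 := by
    rw [hDS0]
    rw [ENNReal.toReal_mul, ENNReal.toReal_inv, ENNReal.toReal_div, ENNReal.toReal_div]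
    simp; norm_num
  -- h(1) = h(2) = 1
  have h1v : (h 1 : ℝ) = 1 := by
    by_contra h1ne
    have hle := acc_le_ifLoss d a b ha.le hb.le (condOn D {1, 2} hT) h (1, true)
      (by simpa using h1ne)
    rw [hDT1r] at hle
    linarith
  have h2v : (h 2 : ℝ) = 1 := by
    by_contra h2ne
    have hle := acc_le_ifLoss d a b ha.le hb.le (condOn D {1, 2} hT) h (2, true)
      (by simpa using h2ne)
    rw [hDT2r] at hle
    linarith
  by_cases hc : h 0 = h 2
  · -- then h 0 = 1 ≠ 0, big accuracy loss on D_S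
    have h0v : (h 0 : ℝ) = 1 := by rw [hc]; exact h2v
    have hle := acc_le_ifLoss d a b ha.le hb.le (condOn D {0, 2} hS) h (0, false)
      (by simp [h0v])
    rw [hDS0r] at hle
    linarith
  · -- h 0 ≠ h 2 : big fairness loss on D_S
    -- values of pushforward marginal
    have hDS0' : (condOn D {0, 2} hS) (0, true) = 0 := by
      rw [condOn]; erw [PMF.filter_apply]; rw [Set.indicator_of_mem (by simp), hD0', zero_mul]
    have hDS1 : (condOn D {0, 2} hS) (1, false) = 0 := by
      rw [condOn]; erw [PMF.filter_apply]; rw [Set.indicator_of_notMem (by simp), zero_mul]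
    have hDS1' : (condOn D {0, 2} hS) (1, true) = 0 := by
      rw [condOn]; erw [PMF.filter_apply]; rw [Set.indicator_of_notMem (by simp), zero_mul]
    have hDS2 : (condOn D {0, 2} hS) (2, false) = 0 := by
      rw [condOn]; erw [PMF.filter_apply]; rw [Set.indicator_of_mem (by simp), hD2', zero_mul]
    have hDS2' : (condOn D {0, 2} hS) (2, true) = (10:ℝ≥0∞)⁻¹ * (9/10)⁻¹ := by
      rw [condOn]; erw [PMF.filter_apply]; rw [hNS, Set.indicator_of_mem (by simp)]
      rw [hD2]; norm_num
    have hX0 : ((condOn D {0, 2} hS).map Prod.fst) 0 = (8/10 : ℝ≥0∞) * (9/10)⁻¹ := by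
      rw [PMF.map_apply, tsum_fintype, Fintype.sum_prod_type]
      simp [Fin.sum_univ_three, hDS0, hDS0', hDS1, hDS1', hDS2, hDS2',
        show (0:Fin 3) ≠ 1 by decide, show (0:Fin 3) ≠ 2 by decide]
    have hX2 : ((condOn D {0, 2} hS).map Prod.fst) 2 = (10:ℝ≥0∞)⁻¹ * (9/10)⁻¹ := by
      rw [PMF.map_apply, tsum_fintype, Fintype.sum_prod_type]
      simp [Fin.sum_univ_three, hDS0, hDS0', hDS1, hDS1', hDS2, hDS2',
        show (2:Fin 3) ≠ 1 by decide, show (2:Fin 3) ≠ 0 by decide]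
    have hne : ((0 : Fin 3), (2 : Fin 3)) ≠ ((2 : Fin 3), (0 : Fin 3)) := by decide
    have hd20 : d (2, 0) = false := by rw [hd_symm]; exact hd02
    have hle := fair_le_ifLoss d a b ha.le hb.le (condOn D {0, 2} hS) h
      ((0 : Fin 3), (2 : Fin 3)) ((2 : Fin 3), (0 : Fin 3))
      ⟨hc, hd02⟩ ⟨Ne.symm hc, hd20⟩ hne
    have hval : (((condOn D {0, 2} hS).map Prod.fst) 0 * ((condOn D {0, 2} hS).map Prod.fst) 2
        + ((condOn D {0, 2} hS).map Prod.fst) 2 * ((condOn D {0, 2} hS).map Prod.fst) 0).toReal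
        = 16/81 := by
      rw [hX0, hX2]
      rw [ENNReal.toReal_add (by simp [ENNReal.add_eq_top, ENNReal.mul_eq_top, ENNReal.div_eq_top]) (by simp [ENNReal.add_eq_top, ENNReal.mul_eq_top, ENNReal.div_eq_top])]
      simp [ENNReal.toReal_mul, ENNReal.toReal_inv, ENNReal.toReal_div]
      norm_num
    rw [hval] at hle
    linarith

end MultiPAC
end
end
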